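/- The autoconvolution transform A is a contraction on (H_R, δ): for any sequences a, b, δ(A(a), A(b)) ≤ δ(a,b); moreover, for a ∈ U_R, δ(A^n(a), U(a)) ≤ 2^{-2(n+1)}, so the iterates A^n(a) converge to the fixed point U(a) ∈ B_R. -/

import Mathlib

open Finset PowerSeries
open scoped Classical

variable {R : Type*} [CommRing R] [Algebra ℚ R]

/-- Binomial convolution of sequences. -/
def bconv (a b : ℕ → R) : ℕ → R :=
  fun n => ∑ h ∈ range (n + 1), (n.choose h : R) * a h * b (n - h)

/-- The identity sequence (1,0,0,...). -/
def eseq : ℕ → R := fun n => if n = 0 then 1 else 0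

/-- The alternating sign transform. -/
def alt (a : ℕ → R) : ℕ → R := fun n => (-1) ^ n * a n

/-- Partial ordinary Bell polynomial `B_{n,k}(x₁,x₂,…)`, for a sequence `x` indexed
from 1, defined as the coefficient of `z^n` in `(∑_{m≥1} x_m z^m)^k`. -/
noncomputable def pBell (n k : ℕ) (x : ℕ → R) : R :=
  PowerSeries.coeff n ((PowerSeries.mk fun m => if m = 0 then 0 else x m) ^ k)

/-- Generalized binomial coefficient `C(1/2, k)`. -/
def halfChoose (k : ℕ) : ℚ :=
  (∏ j ∈ range k, ((1 : ℚ) / 2 - j)) / k.factorial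

/-- The ultrametric distance on sequences: `δ(a,b) = 2^{-k}` where `k` is the length of
the longest common initial segment, and `δ(a,b) = 0` if `a = b`. -/
noncomputable def delta (a b : ℕ → R) : ℝ :=
  if h : a = b then 0
  else (2 : ℝ) ^ (-(Nat.find (show ∃ n, a n ≠ b n by
    by_contra hc
    push_neg at hc
    exact h (funext hc)) : ℤ))

/-- The autoconvolution transform: it fixes `a 0` and the odd-indexed terms, and sets
`(𝒜 a) n = -(1/2) ∑_{h=1}^{n-1} C(n,h)(-1)^h a h a (n-h)` for even `n ≥ 2`. -/
noncomputable def autoconv (a : ℕ → R) : ℕ → R := fun n =>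
  if n = 0 then a 0
  else if Odd n then a n
  else algebraMap ℚ R (-(1 / 2)) *
    ∑ h ∈ Icc 1 (n - 1), (n.choose h : R) * (-1) ^ h * a h * a (n - h)

/-- The transform `𝒰`: it fixes `a 0` and the odd-indexed terms, and replaces the even
ones by the Bell polynomial expressions, producing (for `a ∈ U_R`) the unique element of
`B_R` with the same odd-indexed terms. -/
noncomputable def Utrans (a : ℕ → R) : ℕ → R := fun n =>
  if n = 0 then a 0
  else if Odd n then a n
  else (n.factorial : R) *
    ∑ k ∈ range (n / 2 + 1),
      algebraMap ℚ R (halfChoose k) *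
        pBell (n / 2 + k) (2 * k)
          (fun i => algebraMap ℚ R (1 / (2 * i - 1).factorial) * a (2 * i - 1))

/-! ### Auxiliary lemmas -/

section Vandermonde

lemma halfChoose_zero : halfChoose 0 = 1 := by simp [halfChoose]

lemma halfChoose_succ (k : ℕ) :
    (k + 1 : ℚ) * halfChoose (k + 1) = ((1:ℚ)/2 - k) * halfChoose k := by
  simp only [halfChoose, prod_range_succ, Nat.factorial_succ, Nat.cast_mul, Nat.cast_add,
    Nat.cast_one]
  have h1 : ((k.factorial : ℚ)) ≠ 0 := by exact_mod_cast k.factorial_pos.ne'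
  have h2 : ((k:ℚ) + 1) ≠ 0 := by positivity
  field_simp

noncomputable def vS (K : ℕ) : ℚ := ∑ i ∈ range (K + 1), halfChoose i * halfChoose (K - i)

lemma symm_sum (m : ℕ) :
    (2:ℚ) * ∑ i ∈ range (m+1), (i:ℚ) * (halfChoose i * halfChoose (m - i)) = (m:ℚ) * vS m := by
  have h := sum_range_reflect (fun i => (i:ℚ) * (halfChoose i * halfChoose (m - i))) (m+1)
  rw [two_mul]
  nth_rewrite 2 [← h]
  rw [← sum_add_distrib, vS, mul_sum]
  apply sum_congr rfl
  intro i hi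
  rw [mem_range] at hi
  have hi' : i ≤ m := Nat.lt_succ_iff.mp hi
  have e1 : m + 1 - 1 - i = m - i := by omega
  have e2 : m - (m - i) = i := by omega
  rw [e1, e2]
  have hc : ((i:ℚ) + (m - i : ℕ)) = (m:ℚ) := by
    have : ((m - i : ℕ) : ℚ) = (m:ℚ) - i := by rw [Nat.cast_sub hi']
    rw [this]; ring
  calc (i:ℚ) * (halfChoose i * halfChoose (m - i)) +
        ((m - i : ℕ):ℚ) * (halfChoose (m - i) * halfChoose i)
      = ((i:ℚ) + ((m-i:ℕ):ℚ)) * (halfChoose i * halfChoose (m-i)) := by ring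
    _ = (m:ℚ) * (halfChoose i * halfChoose (m - i)) := by rw [hc]

lemma vS_rec (K : ℕ) : ((K:ℚ)+1) * vS (K+1) = (2 - ((K:ℚ)+1)) * vS K := by
  have key : (2:ℚ) * ∑ i ∈ range (K+2), (i:ℚ) * (halfChoose i * halfChoose (K+1-i)) =
      ((K:ℚ)+1) * vS (K+1) := by
    have := symm_sum (K+1)
    push_cast at this ⊢
    convert this using 2
  have shift : ∑ i ∈ range (K+2), (i:ℚ) * (halfChoose i * halfChoose (K+1-i)) =
      ∑ j ∈ range (K+1), ((j:ℚ)+1) * (halfChoose (j+1) * halfChoose (K-j)) := by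
    rw [sum_range_succ']
    simp only [Nat.cast_zero, zero_mul, add_zero]
    apply sum_congr rfl
    intro j hj
    have : K + 1 - (j + 1) = K - j := by omega
    rw [this]; push_cast; ring
  have step : ∀ j ∈ range (K+1), ((j:ℚ)+1) * (halfChoose (j+1) * halfChoose (K-j)) =
      ((1:ℚ)/2 - j) * (halfChoose j * halfChoose (K-j)) := by
    intro j _
    have hs := halfChoose_succ j
    calc ((j:ℚ)+1) * (halfChoose (j+1) * halfChoose (K-j))
        = (((j:ℚ)+1) * halfChoose (j+1)) * halfChoose (K-j) := by ring
      _ = (((1:ℚ)/2 - j) * halfChoose j) * halfChoose (K-j) := by rw [hs]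
      _ = ((1:ℚ)/2 - j) * (halfChoose j * halfChoose (K-j)) := by ring
  rw [shift, sum_congr rfl step] at key
  have expand : ∑ j ∈ range (K+1), ((1:ℚ)/2 - j) * (halfChoose j * halfChoose (K-j)) =
      (1/2) * vS K - ∑ j ∈ range (K+1), (j:ℚ) * (halfChoose j * halfChoose (K-j)) := by
    rw [vS, mul_sum, ← sum_sub_distrib]
    apply sum_congr rfl; intro j _; ring
  rw [expand] at key
  have hsym := symm_sum K
  have h2 : ∑ j ∈ range (K+1), (j:ℚ) * (halfChoose j * halfChoose (K-j)) = (K:ℚ)/2 * vS K := by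
    linarith
  rw [h2] at key
  linarith

lemma vS_eq (K : ℕ) : vS K = if K ≤ 1 then 1 else 0 := by
  induction K with
  | zero => simp [vS, halfChoose_zero]
  | succ n ih =>
    have hrec := vS_rec n
    have hn1 : ((n:ℚ)+1) ≠ 0 := by positivity
    have hv : vS (n+1) = (2 - ((n:ℚ)+1)) * vS n / ((n:ℚ)+1) := by
      field_simp at hrec ⊢
      linarith
    rw [hv, ih]
    rcases Nat.lt_or_ge n 1 with h0 | h1
    · interval_cases n
      norm_num
    · rcases Nat.lt_or_ge n 2 with h2 | h2
      · interval_cases n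
        norm_num
      · have hx : ¬ (n ≤ 1) := by omega
        have hy : ¬ (n + 1 ≤ 1) := by omega
        simp [hx, hy]

lemma vandermonde_half (K : ℕ) :
    ∑ i ∈ range (K + 1), halfChoose i * halfChoose (K - i) = if K ≤ 1 then 1 else 0 :=
  vS_eq K

end Vandermonde

section Doubling

variable {S : Type*} [CommRing S]

lemma sum_range_even_aux (F : ℕ → S) (n : ℕ) (h : ∀ i, ¬ 2 ∣ i → F i = 0) :
    ∑ i ∈ range (2*n+1), F i = ∑ i ∈ range (n+1), F (2*i) := by
  induction n with
  | zero => simp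
  | succ m ih =>
    have e : 2*(m+1)+1 = (2*m+1) + 1 + 1 := by ring
    have h1 : F (2*m+1) = 0 := h _ (by omega)
    have e2 : 2*m+1+1 = 2*(m+1) := by ring
    rw [e, sum_range_succ, sum_range_succ, ih, h1, add_zero, e2,
      ← sum_range_succ (fun i => F (2*i)) (m+1)]

lemma coeff_mul_range (p q : S⟦X⟧) (m : ℕ) :
    coeff m (p * q) = ∑ i ∈ range (m+1), coeff i p * coeff (m - i) q := by
  rw [coeff_mul, Finset.Nat.sum_antidiagonal_eq_sum_range_succ_mk]

noncomputable def DblFun (p : S⟦X⟧) : S⟦X⟧ :=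
  PowerSeries.mk fun m => if 2 ∣ m then coeff (m/2) p else 0

lemma DblFun_mul (p q : S⟦X⟧) : DblFun (p * q) = DblFun p * DblFun q := by
  ext m
  rw [coeff_mul_range]
  simp only [DblFun, coeff_mk]
  by_cases hm : 2 ∣ m
  · obtain ⟨n, rfl⟩ := hm
    rw [if_pos ⟨n, rfl⟩]
    rw [sum_range_even_aux _ n (by intro i hi; rw [if_neg hi, zero_mul])]
    have hn2 : 2 * n / 2 = n := Nat.mul_div_cancel_left n (by norm_num)
    rw [hn2, coeff_mul_range]
    apply sum_congr rfl
    intro i hi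
    rw [mem_range, Nat.lt_succ_iff] at hi
    rw [if_pos ⟨i, rfl⟩, if_pos (show 2 ∣ 2*n - 2*i by omega)]
    rw [show 2*i/2 = i by omega, show (2*n-2*i)/2 = n - i by omega]
  · rw [if_neg hm]
    symm
    apply sum_eq_zero
    intro i hi
    rw [mem_range, Nat.lt_succ_iff] at hi
    by_cases h2 : 2 ∣ i
    · rw [if_neg (show ¬ 2 ∣ (m - i) by omega), mul_zero]
    · rw [if_neg h2, zero_mul]

noncomputable def Dbl : S⟦X⟧ →+* S⟦X⟧ where
  toFun := DblFun
  map_one' := by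
    ext m
    simp only [DblFun, coeff_mk, coeff_one]
    by_cases hm : m = 0
    · subst hm; norm_num
    · rw [if_neg hm]
      by_cases h : 2 ∣ m
      · rw [if_pos h, if_neg (by omega)]
      · rw [if_neg h]
  map_mul' := DblFun_mul
  map_zero' := by ext m; simp [DblFun]
  map_add' := fun p q => by
    ext m
    simp only [DblFun, coeff_mk, map_add]
    split <;> simp

lemma coeff_Dbl (p : S⟦X⟧) (m : ℕ) :
    coeff m (Dbl p) = if 2 ∣ m then coeff (m/2) p else 0 := by
  simp [Dbl, DblFun]

lemma coeff_Dbl_even (p : S⟦X⟧) (n : ℕ) : coeff (2*n) (Dbl p) = coeff n p := by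
  rw [coeff_Dbl, if_pos ⟨n, rfl⟩]
  rw [show 2*n/2 = n by omega]

lemma coeff_Dbl_odd (p : S⟦X⟧) (m : ℕ) (h : ¬ 2 ∣ m) : coeff m (Dbl p) = 0 := by
  rw [coeff_Dbl, if_neg h]

end Doubling

section Series

lemma inv_fact_mul_fact (n : ℕ) :
    algebraMap ℚ R (1 / n.factorial) * (n.factorial : R) = 1 := by
  have h : (n.factorial : R) = algebraMap ℚ R (n.factorial : ℚ) := by rw [map_natCast]
  rw [h, ← map_mul, one_div, inv_mul_cancel₀ (by exact_mod_cast n.factorial_pos.ne'),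
    map_one]

noncomputable def xseq (a : ℕ → R) : ℕ → R :=
  fun i => algebraMap ℚ R (1 / (2 * i - 1).factorial) * a (2 * i - 1)

noncomputable def Os (a : ℕ → R) : R⟦X⟧ :=
  PowerSeries.mk fun m => if Odd m then algebraMap ℚ R (1 / m.factorial) * a m else 0

noncomputable def Xse (a : ℕ → R) : R⟦X⟧ :=
  PowerSeries.mk fun m => if m = 0 then 0 else xseq a m

noncomputable def Es (a : ℕ → R) : R⟦X⟧ :=
  PowerSeries.mk fun m => if Odd m then 0 else algebraMap ℚ R (1 / m.factorial) * Utrans a m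

lemma Dbl_Xse (a : ℕ → R) : Dbl (Xse a) = X * Os a := by
  ext m
  rw [coeff_Dbl]
  rw [show (X : R⟦X⟧) = X^1 by rw [pow_one], coeff_X_pow_mul']
  by_cases h2 : 2 ∣ m
  · obtain ⟨i, rfl⟩ := h2
    rw [if_pos ⟨i, rfl⟩, show 2*i/2 = i by omega]
    rcases Nat.eq_zero_or_pos i with rfl | hi
    · simp [Xse, Os]
    · rw [if_pos (by omega), Xse, Os, coeff_mk, coeff_mk, if_neg (by omega),
        if_pos (show Odd (2*i-1) from ⟨i - 1, by omega⟩), xseq]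
  · rw [if_neg h2, if_pos (by omega), Os, coeff_mk, if_neg (by rintro ⟨j, hj⟩; omega)]

lemma constantCoeff_Os (a : ℕ → R) : constantCoeff (Os a) = 0 := by
  rw [← coeff_zero_eq_constantCoeff_apply, Os, coeff_mk, if_neg (by simp)]

lemma coeff_Os_pow_zero_of_lt (a : ℕ → R) {m k : ℕ} (h : m < k) :
    coeff m ((Os a) ^ k) = 0 := by
  have hd : (X : R⟦X⟧) ^ k ∣ (Os a) ^ k :=
    pow_dvd_pow_of_dvd (X_dvd_iff.mpr (constantCoeff_Os a)) k
  exact X_pow_dvd_iff.mp hd m h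

lemma coeff_Os_pow_odd (a : ℕ → R) (k : ℕ) {m : ℕ} (h : ¬ 2 ∣ m) :
    coeff m ((Os a) ^ (2*k)) = 0 := by
  have h1 : coeff (m + 2*k) (X ^ (2*k) * (Os a)^(2*k)) = coeff m ((Os a)^(2*k)) :=
    coeff_X_pow_mul _ _ _
  rw [← h1, ← mul_pow, ← Dbl_Xse, ← map_pow, coeff_Dbl_odd _ _ (by omega)]

lemma pBell_eq (a : ℕ → R) (n k : ℕ) :
    pBell (n + k) (2 * k) (xseq a) = coeff (2*n) ((Os a) ^ (2*k)) := by
  have h0 : pBell (n + k) (2 * k) (xseq a) = coeff (n+k) ((Xse a) ^ (2*k)) := rfl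
  rw [h0, ← coeff_Dbl_even, map_pow, Dbl_Xse, mul_pow,
    show 2*(n+k) = 2*n + 2*k by ring, coeff_X_pow_mul]

lemma Utrans_zero (a : ℕ → R) : Utrans a 0 = a 0 := by simp [Utrans]

lemma Utrans_odd (a : ℕ → R) {m : ℕ} (h : Odd m) : Utrans a m = a m := by
  have h0 : m ≠ 0 := by rintro rfl; simp at h
  simp [Utrans, h0, h]

lemma coeff_Es_eq (a : ℕ → R) (ha : a 0 = 1) (B m : ℕ) (hB : m ≤ 2*B+1) :
    coeff m (Es a) =
      ∑ k ∈ range (B+1), algebraMap ℚ R (halfChoose k) * coeff m ((Os a)^(2*k)) := by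
  rw [Es, coeff_mk]
  by_cases hodd : Odd m
  · rw [if_pos hodd]
    symm
    apply sum_eq_zero
    intro k _
    rw [coeff_Os_pow_odd a k (by rw [Nat.odd_iff] at hodd; omega), mul_zero]
  · rw [if_neg hodd]
    rw [Nat.not_odd_iff_even] at hodd
    obtain ⟨n, hn⟩ := hodd
    have hm : m = 2*n := by omega
    subst hm
    have hnB : n ≤ B := by omega
    rcases Nat.eq_zero_or_pos n with rfl | hn1
    · have hU : Utrans a 0 = 1 := by rw [Utrans_zero, ha]
      simp only [Nat.mul_zero, hU, Nat.factorial_zero, Nat.cast_one, mul_one]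
      rw [Finset.sum_eq_single 0]
      · rw [halfChoose_zero, map_one, one_mul, mul_zero, pow_zero, coeff_zero_eq_constantCoeff_apply,
          constantCoeff_one]
        norm_num
      · intro k _ hk
        rw [coeff_Os_pow_zero_of_lt a (by omega), mul_zero]
      · intro h; exact absurd (mem_range.mpr (by omega)) h
    · have hne : 2*n ≠ 0 := by omega
      have hnodd : ¬ Odd (2*n) := by rw [Nat.odd_iff]; omega
      have hU : Utrans a (2*n) = ((2*n).factorial : R) *
          ∑ k ∈ range (n + 1), algebraMap ℚ R (halfChoose k) *
            pBell (n + k) (2 * k) (xseq a) := by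
        rw [Utrans]
        rw [if_neg hne, if_neg hnodd, show 2*n/2 = n by omega]
        rfl
      rw [hU, ← mul_assoc, inv_fact_mul_fact, one_mul]
      have hpb : ∀ k ∈ range (n+1),
          algebraMap ℚ R (halfChoose k) * pBell (n + k) (2 * k) (xseq a) =
          algebraMap ℚ R (halfChoose k) * coeff (2*n) ((Os a)^(2*k)) := by
        intro k _; rw [pBell_eq]
      rw [sum_congr rfl hpb]
      apply sum_subset
      · intro k hk; rw [mem_range] at hk ⊢; omega
      · intro k _ hk
        rw [mem_range] at hk
        rw [coeff_Os_pow_zero_of_lt a (by omega), mul_zero]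

lemma EsEs (a : ℕ → R) (ha : a 0 = 1) : Es a * Es a = 1 + Os a * Os a := by
  ext m
  rw [coeff_mul_range]
  have hE : ∀ i ≤ m, coeff i (Es a) =
      ∑ k ∈ range (m+1), algebraMap ℚ R (halfChoose k) * coeff i ((Os a)^(2*k)) :=
    fun i hi => coeff_Es_eq a ha m i (by omega)
  calc ∑ i ∈ range (m+1), coeff i (Es a) * coeff (m - i) (Es a)
      = ∑ i ∈ range (m+1), ∑ k1 ∈ range (m+1), ∑ k2 ∈ range (m+1),
          (algebraMap ℚ R (halfChoose k1 * halfChoose k2)) *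
            (coeff i ((Os a)^(2*k1)) * coeff (m-i) ((Os a)^(2*k2))) := by
        apply sum_congr rfl
        intro i hi
        rw [mem_range, Nat.lt_succ_iff] at hi
        rw [hE i hi, hE (m-i) (by omega), sum_mul_sum]
        apply sum_congr rfl; intro k1 _; apply sum_congr rfl; intro k2 _
        rw [map_mul]; ring
    _ = ∑ k1 ∈ range (m+1), ∑ k2 ∈ range (m+1),
          (algebraMap ℚ R (halfChoose k1 * halfChoose k2)) *
            coeff m ((Os a)^(2*(k1+k2))) := by
        rw [sum_comm]
        apply sum_congr rfl; intro k1 _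
        rw [sum_comm]
        apply sum_congr rfl; intro k2 _
        rw [← mul_sum]
        congr 1
        rw [show 2*(k1+k2) = 2*k1 + 2*k2 by ring, pow_add, coeff_mul_range]
    _ = coeff m (1 + Os a * Os a) := ?_
  rw [← Finset.sum_product']
  have hmap : ∀ p ∈ (range (m+1)) ×ˢ (range (m+1)), p.1 + p.2 ∈ range (2*m+1) := by
    rintro ⟨p1, p2⟩ hp
    rw [mem_product, mem_range, mem_range] at hp
    rw [mem_range]; omega
  rw [← Finset.sum_fiberwise_of_maps_to hmap]
  have step : ∀ K ∈ range (2*m+1),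
      (∑ p ∈ (range (m+1) ×ˢ range (m+1)).filter (fun p => p.1 + p.2 = K),
        (algebraMap ℚ R (halfChoose p.1 * halfChoose p.2)) * coeff m ((Os a)^(2*(p.1+p.2)))) =
      (algebraMap ℚ R (if K ≤ 1 then 1 else 0)) * coeff m ((Os a)^(2*K)) := by
    intro K _
    have h1 : ∀ p ∈ (range (m+1) ×ˢ range (m+1)).filter (fun p => p.1 + p.2 = K),
        (algebraMap ℚ R (halfChoose p.1 * halfChoose p.2)) * coeff m ((Os a)^(2*(p.1+p.2))) =
        (algebraMap ℚ R (halfChoose p.1 * halfChoose p.2)) * coeff m ((Os a)^(2*K)) := by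
      intro p hp
      rw [mem_filter] at hp
      rw [hp.2]
    rw [sum_congr rfl h1, ← sum_mul]
    by_cases hK : m < 2*K
    · rw [coeff_Os_pow_zero_of_lt a hK, mul_zero, mul_zero]
    · congr 1
      have hfib : (range (m+1) ×ˢ range (m+1)).filter (fun p => p.1 + p.2 = K) =
          Finset.HasAntidiagonal.antidiagonal K := by
        ext ⟨p1, p2⟩
        rw [mem_filter, mem_product, mem_range, mem_range, Finset.HasAntidiagonal.mem_antidiagonal]
        constructor
        · exact fun h => h.2
        · intro h; refine ⟨⟨?_, ?_⟩, h⟩ <;> omega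
      rw [hfib, ← map_sum, Finset.Nat.sum_antidiagonal_eq_sum_range_succ_mk,
        vandermonde_half K]
  rw [sum_congr rfl step]
  have final : ∑ K ∈ range (2*m+1),
      (algebraMap ℚ R (if K ≤ 1 then 1 else 0)) * coeff m ((Os a)^(2*K)) =
      coeff m ((Os a)^0) + coeff m ((Os a)^2) := by
    rcases Nat.eq_zero_or_pos m with rfl | hm
    · have h2 : coeff 0 ((Os a)^2) = 0 := coeff_Os_pow_zero_of_lt a (by omega)
      simp [h2]
    · have hz : ∀ K ∈ range (2*m+1), K ∉ range 2 →
          (algebraMap ℚ R (if K ≤ 1 then 1 else 0)) * coeff m ((Os a)^(2*K)) = 0 := by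
        intro K _ hK
        rw [mem_range] at hK
        rw [if_neg (by omega), map_zero, zero_mul]
      rw [← sum_subset (by intro K hK; rw [mem_range] at hK ⊢; omega) hz]
      rw [sum_range_succ, sum_range_one]
      norm_num
  rw [final, pow_zero, pow_two, map_add]

noncomputable def fs (a : ℕ → R) : R⟦X⟧ :=
  PowerSeries.mk fun n => algebraMap ℚ R (1 / n.factorial) * Utrans a n

noncomputable def gs (a : ℕ → R) : R⟦X⟧ :=
  PowerSeries.mk fun n => (-1)^n * (algebraMap ℚ R (1 / n.factorial) * Utrans a n)

lemma fs_eq (a : ℕ → R) : fs a = Es a + Os a := by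
  ext m
  rw [fs, map_add, Es, Os, coeff_mk, coeff_mk, coeff_mk]
  by_cases h : Odd m
  · rw [if_pos h, if_pos h, zero_add, Utrans_odd a h]
  · rw [if_neg h, if_neg h, add_zero]

lemma gs_eq (a : ℕ → R) : gs a = Es a - Os a := by
  ext m
  rw [gs, map_sub, Es, Os, coeff_mk, coeff_mk, coeff_mk]
  by_cases h : Odd m
  · rw [if_pos h, if_pos h, zero_sub, Utrans_odd a h, Odd.neg_one_pow h, neg_one_mul]
  · rw [if_neg h, if_neg h, sub_zero, Nat.not_odd_iff_even.mp h |>.neg_one_pow, one_mul]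

lemma fg_one (a : ℕ → R) (ha : a 0 = 1) : fs a * gs a = 1 := by
  rw [fs_eq, gs_eq]
  have h := EsEs a ha
  ring_nf
  ring_nf at h
  rw [h]
  ring

lemma bconv_eseq (a : ℕ → R) (ha : a 0 = 1) :
    bconv (Utrans a) (alt (Utrans a)) = eseq := by
  funext n
  have h1 : coeff n (fs a * gs a) = (if n = 0 then 1 else 0) := by
    rw [fg_one a ha, coeff_one]
  rw [coeff_mul_range] at h1
  have key : bconv (Utrans a) (alt (Utrans a)) n =
      (n.factorial : R) * ∑ i ∈ range (n+1), coeff i (fs a) * coeff (n-i) (gs a) := by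
    rw [bconv, mul_sum]
    apply sum_congr rfl
    intro h hh
    rw [mem_range, Nat.lt_succ_iff] at hh
    simp only [fs, gs, coeff_mk, alt]
    have hch : (n.choose h : R) =
        (n.factorial : R) * (algebraMap ℚ R (1 / h.factorial) *
          algebraMap ℚ R (1 / (n-h).factorial)) := by
      have hq : (n.choose h : ℚ) = (n.factorial : ℚ) * ((1 / h.factorial) * (1 / (n-h).factorial)) := by
        rw [Nat.cast_choose ℚ hh]
        field_simp
      have : (n.choose h : R) = algebraMap ℚ R ((n.choose h : ℚ)) := by rw [map_natCast]
      rw [this, hq, map_mul, map_mul, map_natCast]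
    rw [hch]
    ring
  rw [key, h1, eseq]
  by_cases hn : n = 0
  · subst hn; norm_num
  · rw [if_neg hn, mul_zero]

lemma Utrans_fixed (a : ℕ → R) (ha : a 0 = 1) : autoconv (Utrans a) = Utrans a := by
  funext n
  rw [autoconv]
  by_cases h0 : n = 0
  · rw [if_pos h0, h0]
  rw [if_neg h0]
  by_cases hodd : Odd n
  · rw [if_pos hodd]
  rw [if_neg hodd]
  rw [Nat.not_odd_iff_even] at hodd
  have hn2 : 2 ≤ n := by
    rcases hodd with ⟨k, hk⟩; omega
  set u := Utrans a with hu
  have hb : bconv u (alt u) n = 0 := by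
    rw [bconv_eseq a ha, eseq, if_neg h0]
  rw [bconv] at hb
  have hsplit : ∑ h ∈ range (n + 1), (n.choose h : R) * u h * alt u (n - h) =
      u n + (∑ h ∈ Icc 1 (n-1), (n.choose h : R) * (-1)^h * u h * u (n - h)) + u n := by
    rw [sum_range_succ]
    have hrs : ∑ x ∈ range n, (n.choose x : R) * u x * alt u (n - x) =
        (∑ i ∈ range (n-1), (n.choose (i+1) : R) * u (i+1) * alt u (n - (i+1))) +
          (n.choose 0 : R) * u 0 * alt u (n - 0) := by
      rw [← sum_range_succ' (fun x => (n.choose x : R) * u x * alt u (n - x)) (n-1),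
        show n-1+1 = n by omega]
    rw [hrs]
    have h00 : (n.choose 0 : R) * u 0 * alt u (n - 0) = u n := by
      simp only [Nat.choose_zero_right, Nat.cast_one, one_mul, Nat.sub_zero, alt]
      have hu0 : u 0 = 1 := by rw [hu, Utrans_zero, ha]
      rw [hu0, one_mul, hodd.neg_one_pow, one_mul]
    have hnn : (n.choose n : R) * u n * alt u (n - n) = u n := by
      simp only [Nat.choose_self, Nat.cast_one, one_mul, Nat.sub_self, alt]
      have hu0 : u 0 = 1 := by rw [hu, Utrans_zero, ha]
      rw [pow_zero, one_mul, hu0, mul_one]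
    rw [h00, hnn]
    congr 1
    rw [add_comm]
    congr 1
    have hIcc : ∑ h ∈ Icc 1 (n-1), (n.choose h : R) * (-1)^h * u h * u (n - h) =
        ∑ i ∈ range (n-1), (n.choose (i+1) : R) * (-1)^(i+1) * u (i+1) * u (n - (i+1)) := by
      rw [← Finset.Ico_add_one_right_eq_Icc]
      rw [Finset.sum_Ico_eq_sum_range]
      apply sum_congr rfl
      intro i _
      rw [add_comm 1 i]
    rw [hIcc]
    apply sum_congr rfl
    intro i hi
    rw [mem_range] at hi
    simp only [alt]
    have hsign : ((-1:R))^(n - (i+1)) = (-1)^(i+1) := by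
      rcases Nat.even_or_odd (i+1) with he | ho
      · have : Even (n - (i+1)) := by
          rw [Nat.even_sub (by omega)]
          simp [hodd, he]
        rw [this.neg_one_pow, he.neg_one_pow]
      · have : Odd (n - (i+1)) := by
          rcases hodd with ⟨k,hk⟩
          rcases ho with ⟨j,hj⟩
          exact ⟨k - j - 1, by omega⟩
        rw [this.neg_one_pow, ho.neg_one_pow]
    rw [hsign]
    ring
  rw [hsplit] at hb
  have hS : ∑ h ∈ Icc 1 (n-1), (n.choose h : R) * (-1)^h * u h * u (n - h) = (-2 : R) * u n := by
    linear_combination hb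
  rw [hS]
  have hm2 : (-2 : R) = algebraMap ℚ R (-2) := by
    have h2c : ((2:ℚ)) = ((2:ℕ):ℚ) := by norm_num
    rw [map_neg, h2c, map_natCast]
    norm_num
  rw [hm2, ← mul_assoc, ← map_mul]
  norm_num

end Series

/-! ### delta lemmas -/

lemma delta_nonneg (a b : ℕ → R) : 0 ≤ delta a b := by
  rw [delta]
  split
  · exact le_refl 0
  · positivity

lemma delta_le_of_agree (a b : ℕ → R) (N : ℕ) (h : ∀ m < N, a m = b m) :
    delta a b ≤ (2:ℝ) ^ (-(N:ℤ)) := by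
  rw [delta]
  split
  · positivity
  · rename_i hab
    have hfind : N ≤ Nat.find (show ∃ n, a n ≠ b n by
        by_contra hc
        push_neg at hc
        exact hab (funext hc)) := by
      rw [Nat.le_find_iff]
      intro m hm
      simp only [ne_eq, not_not]
      exact h m hm
    apply zpow_le_zpow_right₀ one_le_two
    omega

lemma autoconv_agree (a b : ℕ → R) (N : ℕ) (h : ∀ m < N, a m = b m) :
    ∀ m < N, autoconv a m = autoconv b m := by
  intro m hm
  simp only [autoconv]
  by_cases h0 : m = 0
  · rw [if_pos h0, if_pos h0]
    exact h 0 (by omega)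
  rw [if_neg h0, if_neg h0]
  by_cases hodd : Odd m
  · rw [if_pos hodd, if_pos hodd]
    exact h m hm
  rw [if_neg hodd, if_neg hodd]
  congr 1
  apply sum_congr rfl
  intro i hi
  rw [mem_Icc] at hi
  rw [h i (by omega), h (m - i) (by omega)]

lemma autoconv_contract (a b : ℕ → R) : delta (autoconv a) (autoconv b) ≤ delta a b := by
  by_cases hab : a = b
  · subst hab
    rw [show delta (autoconv a) (autoconv a) = 0 from dif_pos rfl]
    exact delta_nonneg _ _
  · conv_rhs => rw [delta, dif_neg hab]
    have hex : ∃ n, a n ≠ b n := by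
      by_contra hc; push_neg at hc; exact hab (funext hc)
    have hagree : ∀ m < Nat.find hex, a m = b m := fun m hm => not_not.mp (Nat.find_min hex hm)
    exact delta_le_of_agree _ _ _ (autoconv_agree a b _ hagree)

lemma iterate_low (a : ℕ → R) (n m : ℕ) (hm : m = 0 ∨ Odd m) : autoconv^[n] a m = a m := by
  induction n with
  | zero => rfl
  | succ k ih =>
    rw [Function.iterate_succ_apply']
    show (if m = 0 then (autoconv^[k] a) 0
      else if Odd m then (autoconv^[k] a) m else _) = a m
    rcases hm with rfl | hodd
    · rw [if_pos rfl]; exact ih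
    · rw [if_neg (by rintro rfl; simp at hodd), if_pos hodd]; exact ih

lemma iterate_agree (a : ℕ → R) (ha : a 0 = 1) :
    ∀ n m, m ≤ 2*n+1 → autoconv^[n] a m = Utrans a m := by
  intro n
  induction n with
  | zero =>
    intro m hm
    interval_cases m
    · rw [Function.iterate_zero_apply, Utrans_zero]
    · rw [Function.iterate_zero_apply, Utrans_odd a odd_one]
  | succ k ih =>
    intro m hm
    by_cases h0 : m = 0
    · subst h0; rw [iterate_low a _ 0 (Or.inl rfl), Utrans_zero]
    by_cases hodd : Odd m
    · rw [iterate_low a _ m (Or.inr hodd), Utrans_odd a hodd]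
    have hm2 : m % 2 = 0 := Nat.even_iff.mp (Nat.not_odd_iff_even.mp hodd)
    rw [Function.iterate_succ_apply']
    have hfix := congrFun (Utrans_fixed a ha) m
    rw [← hfix]
    simp only [autoconv]
    rw [if_neg h0, if_neg hodd, if_neg h0, if_neg hodd]
    congr 1
    apply sum_congr rfl
    intro i hi
    rw [mem_Icc] at hi
    rw [ih i (by omega), ih (m-i) (by omega)]

/-- The autoconvolution transform is a contraction on `(H_R, δ)`; for `a ∈ U_R` its
iterates approach `𝒰(a)` at rate `δ(𝒜ⁿ(a), 𝒰(a)) ≤ 2^{-2(n+1)}`, hence converge to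
`𝒰(a)`, which is a fixed point of `𝒜` and lies in `B_R`. -/
theorem autoconv_contraction :
    (∀ a b : ℕ → R, delta (autoconv a) (autoconv b) ≤ delta a b) ∧
    (∀ a : ℕ → R, a 0 = 1 →
      (∀ n : ℕ, delta (autoconv^[n] a) (Utrans a) ≤ (2 : ℝ) ^ (-(2 * (n + 1) : ℤ))) ∧
      Filter.Tendsto (fun n => delta (autoconv^[n] a) (Utrans a)) Filter.atTop (nhds 0) ∧
      autoconv (Utrans a) = Utrans a ∧
      (Utrans a) 0 = 1 ∧ bconv (Utrans a) (alt (Utrans a)) = eseq) := by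
  constructor
  · exact autoconv_contract
  intro a ha
  have hbound : ∀ n : ℕ, delta (autoconv^[n] a) (Utrans a) ≤ (2 : ℝ) ^ (-(2 * (n + 1) : ℤ)) := by
    intro n
    have h := delta_le_of_agree (autoconv^[n] a) (Utrans a) (2*n+2)
      (fun m hm => iterate_agree a ha n m (by omega))
    have he : (-(((2*n+2 : ℕ)):ℤ)) = (-(2 * (n + 1) : ℤ)) := by push_cast; ring
    rwa [he] at h
  refine ⟨hbound, ?_, Utrans_fixed a ha, by rw [Utrans_zero, ha], bconv_eseq a ha⟩
  apply squeeze_zero (fun n => delta_nonneg _ _) hbound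
  have h4 : ∀ n : ℕ, (2:ℝ)^(-(2*((n:ℤ)+1))) = ((1:ℝ)/4)^(n+1) := by
    intro n
    rw [zpow_neg, show ((2:ℤ)*((n:ℤ)+1)) = ((2*(n+1):ℕ):ℤ) by push_cast; ring,
      zpow_natCast, pow_mul]
    norm_num
    rw [one_div, inv_pow]
  have hlim : Filter.Tendsto (fun k : ℕ => ((1:ℝ)/4)^k) Filter.atTop (nhds 0) :=
    tendsto_pow_atTop_nhds_zero_of_lt_one (by norm_num) (by norm_num)
  have hcomp : Filter.Tendsto (fun n : ℕ => ((1:ℝ)/4)^(n+1)) Filter.atTop (nhds 0) :=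
    hlim.comp (Filter.tendsto_add_atTop_nat 1)
  convert hcomp using 2 with n
  exact h4 n
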